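/- Let β be an odd integer and n a natural number with n ≥ (β²−1)/4. Then Υ induces a bijection from the set of shift-equivalence classes of symbols of rank n and defect β onto the set 𝒫₂(n − ((β+1)/2)·((β−1)/2)) of bi-partitions of n − (β+1)(β−1)/4. -/

import Mathlib

/-- A Lusztig symbol: a pair of finite sets of natural numbers (equivalently, a pair of
strictly decreasing finite sequences of natural numbers). -/
structure LSymbol where
  A : Finset ℕ
  B : Finset ℕ

namespace LSymbol

/-- The rank of a symbol: `Σ aᵢ + Σ bⱼ − ⌊((m₁+m₂−1)/2)²⌋`. -/
def rank (Λ : LSymbol) : ℤ :=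
  ((Λ.A.sum id + Λ.B.sum id : ℕ) : ℤ) - ((Λ.A.card + Λ.B.card : ℤ) - 1) ^ 2 / 4

/-- The defect of a symbol: `m₁ − m₂`. -/
def defect (Λ : LSymbol) : ℤ :=
  (Λ.A.card : ℤ) - (Λ.B.card : ℤ)

/-- The shift of a symbol: add 1 to every entry of each row and append a new entry 0. -/
def shift (Λ : LSymbol) : LSymbol :=
  ⟨insert 0 (Λ.A.image (· + 1)), insert 0 (Λ.B.image (· + 1))⟩

/-- Shift-equivalence: the equivalence relation generated by `Λ ∼ shift Λ`. -/
def ShiftEquiv : LSymbol → LSymbol → Prop :=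
  Relation.EqvGen fun Λ Λ' => Λ' = Λ.shift

/-- The partition (as a multiset of nonzero parts) attached to one row of a symbol:
for the row `a₁ > a₂ > … > a_m`, the parts are `aᵢ − (m − i)`, discarding zeros. -/
def rowParts (s : Finset ℕ) : Multiset ℕ :=
  ((((s.sort (· ≤ ·)).zipIdx.map fun p => p.1 - p.2) : Multiset ℕ)).filter (· ≠ 0)

/-- The bi-partition `Υ(Λ)` attached to a symbol. -/
def upsilon (Λ : LSymbol) : Multiset ℕ × Multiset ℕ :=
  (rowParts Λ.A, rowParts Λ.B)

end LSymbol

/-- `μ` is a bi-partition of `N`: an ordered pair of partitions (multisets of positive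
natural numbers) whose total size is `N`. -/
def IsBipartitionOf (μ : Multiset ℕ × Multiset ℕ) (N : ℤ) : Prop :=
  (∀ x ∈ μ.1, 0 < x) ∧ (∀ x ∈ μ.2, 0 < x) ∧ ((μ.1.sum + μ.2.sum : ℕ) : ℤ) = N

namespace LSymbol

/-! ### List-level auxiliary machinery -/

private def stairsL (l : List ℕ) : List ℕ := l.zipIdx.map fun p => p.1 + p.2
private def destairsL (l : List ℕ) : List ℕ := l.zipIdx.map fun p => p.1 - p.2

@[simp] private lemma length_stairsL (l : List ℕ) : (stairsL l).length = l.length := by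
  simp [stairsL]

@[simp] private lemma length_destairsL (l : List ℕ) : (destairsL l).length = l.length := by
  simp [destairsL]

private lemma getElem_stairsL (l : List ℕ) (i : ℕ) (h : i < l.length) :
    (stairsL l)[i]'(by simpa) = l[i] + i := by
  simp [stairsL, List.getElem_zipIdx]

private lemma getElem_destairsL (l : List ℕ) (i : ℕ) (h : i < l.length) :
    (destairsL l)[i]'(by simpa) = l[i] - i := by
  simp [destairsL, List.getElem_zipIdx]

private lemma sorted_lt_getElem_add (l : List ℕ) (h : l.Pairwise (· < ·)) (i j : ℕ) (hij : i ≤ j)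
    (hj : j < l.length) : l[i]'(lt_of_le_of_lt hij hj) + (j - i) ≤ l[j] := by
  induction j with
  | zero => interval_cases i; simp
  | succ j ih =>
    rcases Nat.lt_succ_iff_lt_or_eq.mp (Nat.lt_succ_of_le hij) with hi | hi
    · have h1 := ih (Nat.lt_succ_iff.mp hi) (by omega)
      have h2 : l[j]'(by omega) < l[j+1] :=
        (List.pairwise_iff_getElem.mp h) j (j+1) (by omega) hj (by omega)
      omega
    · subst hi; simp

private lemma le_getElem_of_sorted_lt (l : List ℕ) (h : l.Pairwise (· < ·)) (i : ℕ)
    (hi : i < l.length) : i ≤ l[i] := by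
  have := sorted_lt_getElem_add l h 0 i (by omega) hi
  omega

private lemma destairsL_sorted (l : List ℕ) (h : l.Pairwise (· < ·)) :
    (destairsL l).Pairwise (· ≤ ·) := by
  rw [List.pairwise_iff_getElem]
  intro i j hi hj hij
  simp only [length_destairsL] at hi hj
  rw [getElem_destairsL l i hi, getElem_destairsL l j hj]
  have := sorted_lt_getElem_add l h i j hij.le hj
  omega

private lemma stairsL_sorted (l : List ℕ) (h : l.Pairwise (· ≤ ·)) :
    (stairsL l).Pairwise (· < ·) := by
  rw [List.pairwise_iff_getElem]
  intro i j hi hj hij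
  simp only [length_stairsL] at hi hj
  rw [getElem_stairsL l i hi, getElem_stairsL l j hj]
  have := (List.pairwise_iff_getElem.mp h) i j hi hj hij
  omega

private lemma destairsL_stairsL (l : List ℕ) : destairsL (stairsL l) = l := by
  apply List.ext_getElem (by simp)
  intro i h1 h2
  rw [getElem_destairsL _ i (by simpa using h2), getElem_stairsL l i h2]
  omega

private lemma stairsL_destairsL (l : List ℕ) (h : l.Pairwise (· < ·)) :
    stairsL (destairsL l) = l := by
  apply List.ext_getElem (by simp)
  intro i h1 h2
  rw [getElem_stairsL _ i (by simpa using h2), getElem_destairsL l i h2]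
  have := le_getElem_of_sorted_lt l h i h2
  omega

private lemma sum_stairsL (l : List ℕ) : (stairsL l).sum = l.sum + (List.range l.length).sum := by
  have key : ∀ L : List (ℕ × ℕ),
      (L.map fun p => p.1 + p.2).sum = (L.map Prod.fst).sum + (L.map Prod.snd).sum := by
    intro L
    induction L with
    | nil => simp
    | cons a L ih => simp [ih]; omega
  rw [stairsL, key, List.zipIdx_map_fst, List.zipIdx_map_snd, ← List.range_eq_range']

/-- For a strictly sorted list, sorting its `toFinset` recovers the list. -/
private lemma sort_toFinset_of_sorted (l : List ℕ) (h : l.Pairwise (· < ·)) :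
    l.toFinset.sort (· ≤ ·) = l := by
  apply List.Perm.eq_of_pairwise' (Finset.pairwise_sort _ _) (h.imp le_of_lt) ?_
  rw [← Multiset.coe_eq_coe, Finset.sort_eq]
  show (l.toFinset.val : Multiset ℕ) = ↑l
  rw [show l.toFinset.val = (↑l.dedup : Multiset ℕ) from rfl, List.dedup_eq_self.mpr h.nodup]

/-! ### The inverse construction `unrow` -/

/-- The padded sorted list of a multiset of parts. -/
private def padL (P : Multiset ℕ) (m : ℕ) : List ℕ :=
  (P + Multiset.replicate (m - Multiset.card P) 0).sort (· ≤ ·)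

/-- The row (finite set) built from a multiset of parts and a prescribed size. -/
private def unrow (P : Multiset ℕ) (m : ℕ) : Finset ℕ := (stairsL (padL P m)).toFinset

private lemma padL_sorted (P : Multiset ℕ) (m : ℕ) : (padL P m).Pairwise (· ≤ ·) :=
  Multiset.pairwise_sort _ _

private lemma length_padL (P : Multiset ℕ) (m : ℕ) (h : Multiset.card P ≤ m) :
    (padL P m).length = m := by
  have : ((padL P m : List ℕ) : Multiset ℕ) = P + Multiset.replicate (m - Multiset.card P) 0 :=
    Multiset.sort_eq _ _
  have := congrArg Multiset.card this
  simp only [Multiset.coe_card, Multiset.card_add, Multiset.card_replicate] at this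
  omega

private lemma sort_unrow (P : Multiset ℕ) (m : ℕ) :
    (unrow P m).sort (· ≤ ·) = stairsL (padL P m) :=
  sort_toFinset_of_sorted _ (stairsL_sorted _ (padL_sorted P m))

private lemma card_unrow (P : Multiset ℕ) (m : ℕ) (h : Multiset.card P ≤ m) :
    (unrow P m).card = m := by
  rw [← Finset.length_sort (· ≤ ·), sort_unrow, length_stairsL, length_padL P m h]

/-- `rowParts` in terms of `destairsL`. -/
private lemma rowParts_eq (s : Finset ℕ) :
    rowParts s = ((destairsL (s.sort (· ≤ ·)) : Multiset ℕ)).filter (· ≠ 0) := rfl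

private lemma rowParts_unrow (P : Multiset ℕ) (hP : ∀ x ∈ P, x ≠ 0) (m : ℕ)
    (h : Multiset.card P ≤ m) : rowParts (unrow P m) = P := by
  have hrep : (Multiset.replicate (m - Multiset.card P) 0).filter (· ≠ 0) = 0 := by
    rw [Multiset.filter_eq_nil]
    intro a ha
    simp [Multiset.eq_of_mem_replicate ha]
  rw [rowParts_eq, sort_unrow, destairsL_stairsL, show ((padL P m : List ℕ) : Multiset ℕ)
      = P + Multiset.replicate (m - Multiset.card P) 0 from Multiset.sort_eq _ _,
    Multiset.filter_add, hrep, add_zero, Multiset.filter_eq_self.mpr hP]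

/-- Decomposition of `destairsL` of the sort of `s` into parts plus zeros. -/
private lemma destairs_decomp (s : Finset ℕ) :
    ((destairsL (s.sort (· ≤ ·)) : Multiset ℕ))
      = rowParts s + Multiset.replicate (s.card - Multiset.card (rowParts s)) 0 := by
  set M : Multiset ℕ := (destairsL (s.sort (· ≤ ·)) : Multiset ℕ) with hM
  have h2 : M.filter (fun a => ¬ a ≠ 0) = Multiset.replicate (M.count 0) 0 := by
    rw [Multiset.filter_congr (fun x _ => by simp : ∀ x ∈ M, (¬ x ≠ 0) ↔ x = 0)]
    exact Multiset.filter_eq' M 0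
  have h1 := Multiset.filter_add_not (fun a : ℕ => a ≠ 0) M
  rw [h2] at h1
  have hcard : Multiset.card M = s.card := by
    rw [hM, Multiset.coe_card, length_destairsL, Finset.length_sort]
  have hrp : rowParts s = M.filter (fun a => a ≠ 0) := rfl
  have hcc := congrArg Multiset.card h1
  rw [Multiset.card_add, Multiset.card_replicate] at hcc
  rw [hrp]
  rw [show s.card - Multiset.card (Multiset.filter (fun a => a ≠ 0) M) = M.count 0 by omega]
  exact h1.symm

private lemma card_rowParts_le (s : Finset ℕ) : Multiset.card (rowParts s) ≤ s.card := by
  have := congrArg Multiset.card (destairs_decomp s)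
  simp only [Multiset.coe_card, length_destairsL, Finset.length_sort, Multiset.card_add,
    Multiset.card_replicate] at this
  omega

/-- Reconstruction: a row is determined by its parts and its size. -/
private lemma unrow_rowParts (s : Finset ℕ) : unrow (rowParts s) s.card = s := by
  have hl : (s.sort (· ≤ ·)).Pairwise (· < ·) := List.sortedLT_iff_pairwise.mp (Finset.sortedLT_sort s)
  have hpad : padL (rowParts s) s.card = destairsL (s.sort (· ≤ ·)) := by
    apply List.Perm.eq_of_pairwise' (padL_sorted _ _) (destairsL_sorted _ hl) ?_
    rw [← Multiset.coe_eq_coe, show ((padL (rowParts s) s.card : List ℕ) : Multiset ℕ)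
      = rowParts s + Multiset.replicate (s.card - Multiset.card (rowParts s)) 0 from
      Multiset.sort_eq _ _, destairs_decomp s]
  rw [unrow, hpad, stairsL_destairsL _ hl]
  exact Finset.sort_toFinset s _

/-! ### Sum identities -/

private lemma two_mul_sum_range (m : ℕ) : 2 * ((List.range m).sum : ℤ) = m ^ 2 - m := by
  induction m with
  | zero => simp
  | succ m ih =>
    have h : (List.range (m + 1)).sum = (List.range m).sum + m := by simp [List.range_succ]
    rw [h, Nat.cast_add, Nat.cast_add, Nat.cast_one]
    ring_nf
    ring_nf at ih
    linarith

private lemma sum_row (s : Finset ℕ) :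
    ((s.sum id : ℕ) : ℤ) = ((rowParts s).sum : ℤ) + ((List.range s.card).sum : ℤ) := by
  have h1 : s.sum id = s.val.sum := by rw [Finset.sum, Multiset.map_id]
  have h2 : s.val.sum = (s.sort (· ≤ ·)).sum := by
    rw [← Finset.sort_eq s (· ≤ ·), Multiset.sum_coe]
  have h3 : (s.sort (· ≤ ·)).sum
      = (destairsL (s.sort (· ≤ ·))).sum + (List.range s.card).sum := by
    conv_lhs => rw [← stairsL_destairsL _ (List.sortedLT_iff_pairwise.mp (Finset.sortedLT_sort s))]
    rw [sum_stairsL, length_destairsL, Finset.length_sort]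
  have h4 : (destairsL (s.sort (· ≤ ·))).sum = (rowParts s).sum := by
    rw [← Multiset.sum_coe, destairs_decomp s, Multiset.sum_add]
    simp
  rw [h1, h2, h3, h4]
  push_cast
  ring

/-! ### Shift lemmas -/

private lemma shiftRow_sort (s : Finset ℕ) :
    (insert 0 (s.image (· + 1))).sort (· ≤ ·) = 0 :: (s.sort (· ≤ ·)).map (· + 1) := by
  have h0 : (0 : ℕ) ∉ s.image (· + 1) := by simp
  apply List.Perm.eq_of_pairwise' (Finset.pairwise_sort _ _) ?_ ?_
  swap
  · rw [← Multiset.coe_eq_coe, Finset.sort_eq, Finset.insert_val_of_notMem h0,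
      Finset.image_val_of_injOn (fun a _ b _ h => by simpa using h)]
    rw [show ((0 :: (s.sort (· ≤ ·)).map (· + 1) : List ℕ) : Multiset ℕ)
      = 0 ::ₘ ((s.sort (· ≤ ·)).map (· + 1) : List ℕ) from rfl]
    congr 1
    rw [← Multiset.map_coe, Finset.sort_eq]
  · rw [List.pairwise_cons]
    constructor
    · intro b hb
      exact Nat.zero_le b
    · exact List.Pairwise.map _ (fun a b h => Nat.add_le_add_right h 1)
        (Finset.pairwise_sort s (· ≤ ·))

private lemma destairsL_cons_shift (l : List ℕ) :
    destairsL (0 :: l.map (· + 1)) = 0 :: destairsL l := by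
  apply List.ext_getElem (by simp)
  intro i h1 h2
  match i with
  | 0 =>
    rw [getElem_destairsL _ 0 (by simpa using h2)]
    simp
  | (j+1) =>
    rw [getElem_destairsL _ (j+1) (by simpa using h2)]
    have hj : j < l.length := by simpa using h2
    simp only [List.getElem_cons_succ, List.getElem_map]
    rw [getElem_destairsL l j hj]
    omega

private lemma rowParts_shiftRow (s : Finset ℕ) :
    rowParts (insert 0 (s.image (· + 1))) = rowParts s := by
  rw [rowParts_eq, shiftRow_sort, destairsL_cons_shift, rowParts_eq]
  rw [show ((0 :: destairsL (s.sort (· ≤ ·)) : List ℕ) : Multiset ℕ)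
    = 0 ::ₘ (destairsL (s.sort (· ≤ ·)) : List ℕ) from rfl]
  rw [Multiset.filter_cons_of_neg]
  simp

private lemma card_shiftRow (s : Finset ℕ) :
    (insert 0 (s.image (· + 1))).card = s.card + 1 := by
  rw [Finset.card_insert_of_notMem (by simp),
    Finset.card_image_of_injective _ (fun a b h => by simpa using h)]

private lemma upsilon_shift (Λ : LSymbol) : Λ.shift.upsilon = Λ.upsilon := by
  simp [upsilon, shift, rowParts_shiftRow]

private lemma cardA_iterate (Λ : LSymbol) (k : ℕ) :
    (shift^[k] Λ).A.card = Λ.A.card + k := by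
  induction k with
  | zero => simp
  | succ k ih =>
    rw [Function.iterate_succ_apply']
    show (insert 0 ((shift^[k] Λ).A.image (· + 1))).card = _
    rw [card_shiftRow, ih]
    omega

private lemma cardB_iterate (Λ : LSymbol) (k : ℕ) :
    (shift^[k] Λ).B.card = Λ.B.card + k := by
  induction k with
  | zero => simp
  | succ k ih =>
    rw [Function.iterate_succ_apply']
    show (insert 0 ((shift^[k] Λ).B.image (· + 1))).card = _
    rw [card_shiftRow, ih]
    omega

private lemma upsilon_iterate (Λ : LSymbol) (k : ℕ) :
    (shift^[k] Λ).upsilon = Λ.upsilon := by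
  induction k with
  | zero => simp
  | succ k ih => rw [Function.iterate_succ_apply', upsilon_shift, ih]

private lemma shiftEquiv_iterate (Λ : LSymbol) (k : ℕ) : ShiftEquiv Λ (shift^[k] Λ) := by
  induction k with
  | zero => exact Relation.EqvGen.refl Λ
  | succ k ih =>
    rw [Function.iterate_succ_apply']
    exact Relation.EqvGen.trans _ _ _ ih (Relation.EqvGen.rel _ _ rfl)

private lemma eq_of_upsilon_of_cards {Λ Λ' : LSymbol} (h : Λ.upsilon = Λ'.upsilon)
    (hA : Λ.A.card = Λ'.A.card) (hB : Λ.B.card = Λ'.B.card) : Λ = Λ' := by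
  have h1 : rowParts Λ.A = rowParts Λ'.A := congrArg Prod.fst h
  have h2 : rowParts Λ.B = rowParts Λ'.B := congrArg Prod.snd h
  have eA : Λ.A = Λ'.A := by
    rw [← unrow_rowParts Λ.A, ← unrow_rowParts Λ'.A, h1, hA]
  have eB : Λ.B = Λ'.B := by
    rw [← unrow_rowParts Λ.B, ← unrow_rowParts Λ'.B, h2, hB]
  cases Λ; cases Λ'
  simp_all

private lemma shiftEquiv_of_le {Λ Λ' : LSymbol} (h : Λ.upsilon = Λ'.upsilon)
    (hd : Λ.defect = Λ'.defect) (hle : Λ.A.card ≤ Λ'.A.card) : ShiftEquiv Λ Λ' := by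
  set k := Λ'.A.card - Λ.A.card with hk
  have hdd := hd
  unfold defect at hdd
  have hEq : shift^[k] Λ = Λ' := by
    apply eq_of_upsilon_of_cards
    · rw [upsilon_iterate, h]
    · rw [cardA_iterate]; omega
    · rw [cardB_iterate]; omega
  exact hEq ▸ shiftEquiv_iterate Λ k

private lemma shiftEquiv_of_upsilon {Λ Λ' : LSymbol} (h : Λ.upsilon = Λ'.upsilon)
    (hd : Λ.defect = Λ'.defect) : ShiftEquiv Λ Λ' := by
  rcases le_total Λ.A.card Λ'.A.card with hle | hle
  · exact shiftEquiv_of_le h hd hle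
  · exact Relation.EqvGen.symm _ _ (shiftEquiv_of_le h.symm hd.symm hle)

private lemma upsilon_eq_of_shiftEquiv {Λ Λ' : LSymbol} (h : ShiftEquiv Λ Λ') :
    Λ.upsilon = Λ'.upsilon := by
  induction h with
  | rel x y hxy => rw [hxy, upsilon_shift]
  | refl x => rfl
  | symm x y _ ih => exact ih.symm
  | trans x y z _ _ ih1 ih2 => exact ih1.trans ih2

end LSymbol

theorem statement2 (β : ℤ) (hβ : Odd β) (n : ℕ) (hn : (β ^ 2 - 1) / 4 ≤ (n : ℤ)) :
    (∀ Λ : LSymbol, Λ.rank = n → Λ.defect = β →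
      IsBipartitionOf Λ.upsilon ((n : ℤ) - ((β + 1) / 2) * ((β - 1) / 2))) ∧
    (∀ Λ Λ' : LSymbol, Λ.rank = n → Λ.defect = β → Λ'.rank = n → Λ'.defect = β →
      (Λ.upsilon = Λ'.upsilon ↔ LSymbol.ShiftEquiv Λ Λ')) ∧
    (∀ μ : Multiset ℕ × Multiset ℕ,
      IsBipartitionOf μ ((n : ℤ) - ((β + 1) / 2) * ((β - 1) / 2)) →
      ∃ Λ : LSymbol, Λ.rank = n ∧ Λ.defect = β ∧ Λ.upsilon = μ) := by
  obtain ⟨k, hk⟩ := hβ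
  have hp1 : (β + 1) / 2 = k + 1 := by omega
  have hp2 : (β - 1) / 2 = k := by omega
  have hP : ((β + 1) / 2) * ((β - 1) / 2) = k ^ 2 + k := by rw [hp1, hp2]; ring
  refine ⟨?_, ?_, ?_⟩
  · -- part 1
    intro Λ hr hd
    refine ⟨fun x hx => ?_, fun x hx => ?_, ?_⟩
    · have hx' : x ∈ LSymbol.rowParts Λ.A := hx
      rw [LSymbol.rowParts] at hx'
      have h2 := Multiset.of_mem_filter hx'
      exact Nat.pos_of_ne_zero h2
    · have hx' : x ∈ LSymbol.rowParts Λ.B := hx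
      rw [LSymbol.rowParts] at hx'
      have h2 := Multiset.of_mem_filter hx'
      exact Nat.pos_of_ne_zero h2
    · -- the sum identity
      set m₁ := Λ.A.card with hm₁
      set m₂ := Λ.B.card with hm₂
      have e1 := LSymbol.sum_row Λ.A
      have e2 := LSymbol.sum_row Λ.B
      have t1 := LSymbol.two_mul_sum_range m₁
      have t2 := LSymbol.two_mul_sum_range m₂
      unfold LSymbol.rank at hr
      unfold LSymbol.defect at hd
      rw [hP]
      show ((((Multiset.sum (LSymbol.rowParts Λ.A)) + Multiset.sum (LSymbol.rowParts Λ.B) : ℕ)) : ℤ)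
        = (n : ℤ) - (k ^ 2 + k)
      have hE : ((m₁ : ℤ) + m₂ - 1) ^ 2
          = 4 * (((List.range m₁).sum : ℤ) + ((List.range m₂).sum : ℤ) - (k ^ 2 + k)) := by
        have hb2 : (β : ℤ) ^ 2 = ((m₁ : ℤ) - m₂) ^ 2 := by rw [← hd]
        have hbk : (β : ℤ) ^ 2 = 4 * (k ^ 2 + k) + 1 := by rw [hk]; ring
        linear_combination -2 * t1 - 2 * t2 + hb2 - hbk
      rw [show ((Λ.A.card : ℤ) + Λ.B.card - 1) = ((m₁ : ℤ) + m₂ - 1) from by rw [hm₁, hm₂],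
        hE, Int.mul_ediv_cancel_left _ (by norm_num)] at hr
      push_cast at hr e1 e2 ⊢
      linarith
  · -- part 2
    intro Λ Λ' hr hd hr' hd'
    exact ⟨fun h => LSymbol.shiftEquiv_of_upsilon h (hd.trans hd'.symm),
      LSymbol.upsilon_eq_of_shiftEquiv⟩
  · -- part 3
    intro μ hμ
    obtain ⟨hpos1, hpos2, hsum⟩ := hμ
    set c₁ := Multiset.card μ.1 with hc₁
    set c₂ := Multiset.card μ.2 with hc₂
    set m₂ := c₁ + c₂ + β.natAbs with hm₂def
    have hm₁nn : (0 : ℤ) ≤ (m₂ : ℤ) + β := by omega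
    set m₁ := ((m₂ : ℤ) + β).toNat with hm₁def
    have hm₁ : (m₁ : ℤ) = (m₂ : ℤ) + β := Int.toNat_of_nonneg hm₁nn
    have hc₁le : c₁ ≤ m₁ := by omega
    have hc₂le : c₂ ≤ m₂ := by omega
    refine ⟨⟨LSymbol.unrow μ.1 m₁, LSymbol.unrow μ.2 m₂⟩, ?_, ?_, ?_⟩
    · -- rank
      unfold LSymbol.rank
      have cA : (LSymbol.unrow μ.1 m₁).card = m₁ := LSymbol.card_unrow _ _ hc₁le
      have cB : (LSymbol.unrow μ.2 m₂).card = m₂ := LSymbol.card_unrow _ _ hc₂le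
      have rA : LSymbol.rowParts (LSymbol.unrow μ.1 m₁) = μ.1 :=
        LSymbol.rowParts_unrow _ (fun x hx => by have := hpos1 x hx; omega) _ hc₁le
      have rB : LSymbol.rowParts (LSymbol.unrow μ.2 m₂) = μ.2 :=
        LSymbol.rowParts_unrow _ (fun x hx => by have := hpos2 x hx; omega) _ hc₂le
      have e1 := LSymbol.sum_row (LSymbol.unrow μ.1 m₁)
      have e2 := LSymbol.sum_row (LSymbol.unrow μ.2 m₂)
      rw [cA, rA] at e1
      rw [cB, rB] at e2
      have t1 := LSymbol.two_mul_sum_range m₁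
      have t2 := LSymbol.two_mul_sum_range m₂
      rw [hP] at hsum
      have hE : ((m₁ : ℤ) + m₂ - 1) ^ 2
          = 4 * (((List.range m₁).sum : ℤ) + ((List.range m₂).sum : ℤ) - (k ^ 2 + k)) := by
        have hb2 : (β : ℤ) ^ 2 = ((m₁ : ℤ) - m₂) ^ 2 := by rw [show (m₁:ℤ) - m₂ = β by omega]
        have hbk : (β : ℤ) ^ 2 = 4 * (k ^ 2 + k) + 1 := by rw [hk]; ring
        linear_combination -2 * t1 - 2 * t2 + hb2 - hbk
      rw [cA, cB]
      show (((LSymbol.unrow μ.1 m₁).sum id + (LSymbol.unrow μ.2 m₂).sum id : ℕ) : ℤ)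
        - ((m₁ : ℤ) + m₂ - 1) ^ 2 / 4 = n
      rw [hE, Int.mul_ediv_cancel_left _ (by norm_num)]
      push_cast at e1 e2 hsum ⊢
      linarith
    · -- defect
      unfold LSymbol.defect
      rw [LSymbol.card_unrow _ _ hc₁le, LSymbol.card_unrow _ _ hc₂le]
      omega
    · -- upsilon
      unfold LSymbol.upsilon
      rw [LSymbol.rowParts_unrow _ (fun x hx => by have := hpos1 x hx; omega) _ hc₁le,
        LSymbol.rowParts_unrow _ (fun x hx => by have := hpos2 x hx; omega) _ hc₂le]
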